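/- arXiv:1306.5037 — 2 statements merged into one kernel-verified Lean document; each statement's English description precedes it below -/
import Mathlib

section
/- Let g_n in L^2(R) with supp(g_n) = [c_n, d_n], c_n < d_n, and b_n > 1/(d_n - c_n) for all n. Suppose there is epsilon > 0 such that d_{n-1} <= c_{n+1} and b_n^{-1} >= max{(d_n - c_n)/2, c_{n+1} - c_n, d_n - d_{n-1}} + epsilon for all n. Define I^-_{n,k} = [c_n, d_{n+k-1} - B^+_{n,k}] with B^+_{n,k} = sum_{j=0}^{k-1} b_{n+j}^{-1}. Then for all n in Z and k in N, I^-_{n,k+1} equals the intersection of I^-_{n,1} with the translate I^-_{n+1,k} - b_n^{-1}, and the length of I^-_{n,k+1} is strictly less than the minimum of the lengths of I^-_{n,k} and I^-_{n+1,k}. -/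
noncomputable section

/-- `B⁺_{n,k} = ∑_{j=0}^{k-1} b_{n+j}⁻¹`. -/
def Bp (b : ℤ → ℝ) (n : ℤ) (k : ℕ) : ℝ := ∑ j ∈ Finset.range k, (b (n + (j : ℤ)))⁻¹

/-- `B⁻_{n,k} = ∑_{j=0}^{k-1} b_{n-j}⁻¹`. -/
def Bm (b : ℤ → ℝ) (n : ℤ) (k : ℕ) : ℝ := ∑ j ∈ Finset.range k, (b (n - (j : ℤ)))⁻¹

/-- `I⁻_{n,k} = [c_n, d_{n+k-1} - B⁺_{n,k}]`. -/
def Imi (b c d : ℤ → ℝ) (n : ℤ) (k : ℕ) : Set ℝ :=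
  Set.Icc (c n) (d (n + (k : ℤ) - 1) - Bp b n k)

/-- `I⁺_{n,k} = [c_{n-k+1} + B⁻_{n,k}, d_n]`. -/
def Ipl (b c d : ℤ → ℝ) (n : ℤ) (k : ℕ) : Set ℝ :=
  Set.Icc (c (n - (k : ℤ) + 1) + Bm b n k) (d n)

/-- The (signed) length of `I⁻_{n,k}`. -/
def lenImi (b c d : ℤ → ℝ) (n : ℤ) (k : ℕ) : ℝ :=
  d (n + (k : ℤ) - 1) - Bp b n k - c n

end


lemma Bp_succ (b : ℤ → ℝ) (n : ℤ) (k : ℕ) :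
    Bp b n (k + 1) = Bp b n k + (b (n + (k : ℤ)))⁻¹ := by
  simp [Bp, Finset.sum_range_succ]

lemma Bp_succ' (b : ℤ → ℝ) (n : ℤ) (k : ℕ) :
    Bp b n (k + 1) = (b n)⁻¹ + Bp b (n + 1) k := by
  unfold Bp
  rw [Finset.sum_range_succ']
  simp only [Nat.cast_zero, add_zero, Nat.cast_add, Nat.cast_one]
  rw [add_comm]
  congr 1
  refine Finset.sum_congr rfl fun j _ => ?_
  congr 2
  ring

/-- Lemma 5.1(a): under the standing hypotheses,
`I⁻_{n,k+1} = I⁻_{n,1} ∩ (I⁻_{n+1,k} - bₙ⁻¹)` with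
`|I⁻_{n,k+1}| < min {|I⁻_{n,k}|, |I⁻_{n+1,k}|}`. -/
theorem stmt4 (g : ℤ → ℝ → ℂ) (b c d : ℤ → ℝ) (ε : ℝ)
    (hsupp : ∀ n, Function.support (g n) = Set.Icc (c n) (d n))
    (hcd : ∀ n, c n < d n) (hbpos : ∀ n, 0 < b n)
    (hb1 : ∀ n, 1 / (d n - c n) < b n)
    (hε : 0 < ε) (hsep : ∀ n, d (n - 1) ≤ c (n + 1))
    (hbig : ∀ n, max (max ((d n - c n) / 2) (c (n + 1) - c n)) (d n - d (n - 1)) + ε ≤ (b n)⁻¹) :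
    ∀ n : ℤ, ∀ k : ℕ, 1 ≤ k →
      Imi b c d n (k + 1) = Imi b c d n 1 ∩ ((· + (b n)⁻¹) ⁻¹' Imi b c d (n + 1) k) ∧
      lenImi b c d n (k + 1) < min (lenImi b c d n k) (lenImi b c d (n + 1) k) := by
  have hD : ∀ m : ℤ, d m - d (m - 1) ≤ (b m)⁻¹ - ε := fun m => by
    have h := hbig m
    have h2 := le_max_right (max ((d m - c m) / 2) (c (m + 1) - c m)) (d m - d (m - 1))
    linarith
  have hC : ∀ m : ℤ, c (m + 1) - c m ≤ (b m)⁻¹ - ε := fun m => by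
    have h := hbig m
    have h2 := le_max_right ((d m - c m) / 2) (c (m + 1) - c m)
    have h3 := le_max_left (max ((d m - c m) / 2) (c (m + 1) - c m)) (d m - d (m - 1))
    linarith
  have hA : ∀ (n : ℤ) (k : ℕ), d (n + (k : ℤ)) - d n ≤ Bp b (n + 1) k - (k : ℝ) * ε := by
    intro n k
    induction k with
    | zero => simp [Bp]
    | succ k ih =>
      have h1 := hD (n + (k : ℤ) + 1)
      have e2 : n + (k : ℤ) + 1 - 1 = n + (k : ℤ) := by ring
      rw [e2] at h1
      rw [Bp_succ]
      push_cast
      have e1 : n + ((k : ℤ) + 1) = n + (k : ℤ) + 1 := by ring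
      have e3 : n + 1 + (k : ℤ) = n + (k : ℤ) + 1 := by ring
      rw [e1, e3]
      linarith
  intro n k hk
  have hkε : 0 ≤ (k : ℝ) * ε := by positivity
  have hAnk := hA n k
  constructor
  · have key : Imi b c d n (k + 1)
        = Set.Icc (c n) (d (n + 1 + (k : ℤ) - 1) - Bp b (n + 1) k - (b n)⁻¹) := by
      unfold Imi
      rw [Bp_succ']
      have e0 : n + ((k + 1 : ℕ) : ℤ) - 1 = n + 1 + (k : ℤ) - 1 := by push_cast; ring
      rw [e0]
      congr 1; ring
    have hone : Imi b c d n 1 = Set.Icc (c n) (d n - (b n)⁻¹) := by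
      unfold Imi
      norm_num
      congr 2 <;> simp [Bp] <;> ring
    have hmax : c (n + 1) - (b n)⁻¹ ≤ c n := by
      have := hC n; linarith
    have hmin : d (n + 1 + (k : ℤ) - 1) - Bp b (n + 1) k - (b n)⁻¹ ≤ d n - (b n)⁻¹ := by
      have e : n + 1 + (k : ℤ) - 1 = n + (k : ℤ) := by ring
      rw [e]; linarith
    rw [key, hone, Imi, Set.preimage_add_const_Icc, Set.Icc_inter_Icc,
      max_eq_left hmax, min_eq_right hmin]
  · have e : n + ((k : ℤ) + 1) - 1 = n + (k : ℤ) := by ring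
    have e2 : n + 1 + (k : ℤ) - 1 = n + (k : ℤ) := by ring
    have h1 := hD (n + (k : ℤ))
    have e3 : n + (k : ℤ) - 1 = n + ((k : ℤ) - 1) := by ring
    have hCn := hC n
    rw [lt_min_iff]
    constructor
    · have hs := Bp_succ b n k
      unfold lenImi
      rw [hs]
      push_cast
      rw [e]
      have e4 : n + (k : ℤ) + 1 - 1 = n + (k : ℤ) := by ring
      have h1' := hD (n + (k : ℤ))
      have e5 : n + (k : ℤ) - 1 = n + (k : ℤ) - 1 := rfl
      linarith
    · have hs := Bp_succ' b n k
      unfold lenImi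
      rw [hs]
      push_cast
      rw [e, e2]
      linarith
end

section
/- Under the standing interval hypotheses, if I^-_{n,k} intersects I^+_{m,j} nontrivially, then m is n-1 or n-2; and if I^-_{n,k} intersects I^+_{n-2,j}, then c_n = d_{n-2} (the intersection is the single point c_n). -/
/-- Lemma 5.1(d): under the standing hypotheses, if `I⁻_{n,k}` meets `I⁺_{m,j}` then
`m ∈ {n-1, n-2}`, and if `I⁻_{n,k}` meets `I⁺_{n-2,j}` then `c_n = d_{n-2}`. -/
theorem stmt7 (g : ℤ → ℝ → ℂ) (b c d : ℤ → ℝ) (ε : ℝ)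
    (hsupp : ∀ n, Function.support (g n) = Set.Icc (c n) (d n))
    (hcd : ∀ n, c n < d n) (hbpos : ∀ n, 0 < b n)
    (hb1 : ∀ n, 1 / (d n - c n) < b n)
    (hε : 0 < ε) (hsep : ∀ n, d (n - 1) ≤ c (n + 1))
    (hbig : ∀ n, max (max ((d n - c n) / 2) (c (n + 1) - c n)) (d n - d (n - 1)) + ε ≤ (b n)⁻¹) :
    ∀ n m : ℤ, ∀ k j : ℕ, 1 ≤ k → 1 ≤ j →
      ((Imi b c d n k ∩ Ipl b c d m j).Nonempty → m = n - 1 ∨ m = n - 2) ∧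
      ((Imi b c d n k ∩ Ipl b c d (n - 2) j).Nonempty → c n = d (n - 2)) := by
  -- basic derived facts
  have hinv : ∀ t : ℤ, (b t)⁻¹ < d t - c t := by
    intro t
    have h0 : (0:ℝ) < d t - c t := sub_pos.mpr (hcd t)
    have h1 : (0:ℝ) < 1 / (d t - c t) := by positivity
    have h2 := inv_strictAnti₀ h1 (hb1 t)
    rwa [one_div, inv_inv] at h2
  have hbigC : ∀ t : ℤ, c (t + 1) - c t + ε ≤ (b t)⁻¹ := by
    intro t
    have h := hbig t
    have h2 : c (t+1) - c t ≤ max (max ((d t - c t) / 2) (c (t + 1) - c t)) (d t - d (t - 1)) :=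
      le_max_of_le_left (le_max_right _ _)
    linarith
  have hbigD : ∀ t : ℤ, d t - d (t - 1) + ε ≤ (b t)⁻¹ := by
    intro t
    have h := hbig t
    have h2 : d t - d (t-1) ≤ max (max ((d t - c t) / 2) (c (t + 1) - c t)) (d t - d (t - 1)) :=
      le_max_right _ _
    linarith
  have hCd : ∀ t : ℤ, c (t + 1) + ε < d t := fun t => by
    have := hbigC t; have := hinv t; linarith
  have hCd' : ∀ t : ℤ, c t + ε < d (t - 1) := fun t => by
    have := hbigD t; have := hinv t; linarith
  have hsep' : ∀ t : ℤ, d t ≤ c (t + 2) := by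
    intro t
    have h := hsep (t + 1)
    rwa [show t + 1 - 1 = t by ring, show t + 1 + 1 = t + 2 by ring] at h
  -- monotonicity of c and d
  have hcstep : ∀ t : ℤ, c t ≤ c (t + 1) := by
    intro t
    have h1 := hCd' t
    have h2 := hsep t
    linarith
  have hdstep : ∀ t : ℤ, d t ≤ d (t + 1) := by
    intro t
    have h1 := hsep' t
    have h2 := hCd (t + 1)
    rw [show t + 1 + 1 = t + 2 by ring] at h2
    linarith
  have hmono : ∀ f : ℤ → ℝ, (∀ t, f t ≤ f (t + 1)) → ∀ s t : ℤ, s ≤ t → f s ≤ f t := by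
    intro f hf s t hst
    exact Int.le_induction (motive := fun u _ => f s ≤ f u) le_rfl (fun t' _ ih => ih.trans (hf t')) t hst
  -- telescoping bounds
  have hBp : ∀ N : ℤ, ∀ K : ℕ, d (N + (K:ℤ) - 1) - d (N - 1) + (K:ℝ) * ε ≤ Bp b N K := by
    intro N K
    induction K with
    | zero => norm_num [Bp]
    | succ K ih =>
      have hstep := hbigD (N + (K:ℤ))
      rw [show N + (K:ℤ) - 1 = N + (K:ℤ) - 1 by ring] at hstep
      have e1 : N + ((K:ℕ)+1 : ℤ) - 1 = N + (K:ℤ) := by push_cast; ring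
      have e2 : Bp b N (K+1) = Bp b N K + (b (N + (K:ℤ)))⁻¹ := by
        rw [Bp, Finset.sum_range_succ]; rfl
      push_cast
      rw [show N + ((K:ℤ)+1) - 1 = N + (K:ℤ) by ring]
      rw [e2]
      linarith
  have hBm : ∀ M : ℤ, ∀ J : ℕ, c (M + 1) - c (M - (J:ℤ) + 1) + (J:ℝ) * ε ≤ Bm b M J := by
    intro M J
    induction J with
    | zero => norm_num [Bm]
    | succ J ih =>
      have hstep := hbigC (M - (J:ℤ))
      rw [show M - (J:ℤ) + 1 = M - (J:ℤ) + 1 by ring] at hstep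
      have e2 : Bm b M (J+1) = Bm b M J + (b (M - (J:ℤ)))⁻¹ := by
        rw [Bm, Finset.sum_range_succ]; rfl
      push_cast
      rw [show M - ((J:ℤ)+1) + 1 = M - (J:ℤ) by ring]
      rw [e2]
      linarith
  intro n m k j hk hj
  constructor
  · -- part 1
    rintro ⟨x, hx1, hx2⟩
    simp only [Imi, Set.mem_Icc] at hx1
    simp only [Ipl, Set.mem_Icc] at hx2
    by_contra hcon
    push_neg at hcon
    obtain ⟨h1, h2⟩ := hcon
    rcases le_or_gt n m with hm | hm
    · -- m ≥ n : contradiction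
      have hxg : c (m + 1) + (j:ℝ) * ε ≤ x := by
        have h := hBm m j
        linarith [hx2.1]
      have hxs : x ≤ d (n - 1) - (k:ℝ) * ε := by
        have h := hBp n k
        linarith [hx1.2]
      have hcm : c (n + 1) ≤ c (m + 1) := hmono c hcstep _ _ (by omega)
      have hdn : d (n - 1) ≤ c (n + 1) := hsep n
      have hjε : ε ≤ (j:ℝ) * ε := le_mul_of_one_le_left hε.le (by exact_mod_cast hj)
      have hkε : ε ≤ (k:ℝ) * ε := le_mul_of_one_le_left hε.le (by exact_mod_cast hk)
      linarith
    · -- m ≤ n - 3 : contradiction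
      have hm3 : m ≤ n - 3 := by omega
      have hdm : d m ≤ d (n - 3) := hmono d hdstep _ _ hm3
      have h3 : d (n - 3) ≤ c (n - 1) := by
        have h := hsep' (n - 3)
        rwa [show n - 3 + 2 = n - 1 by ring] at h
      have h4 : c (n - 1) + ε < d (n - 2) := by
        have h := hCd (n - 2)
        rwa [show n - 2 + 1 = n - 1 by ring] at h
      have h5 : d (n - 2) ≤ c n := by
        have h := hsep' (n - 2)
        rwa [show n - 2 + 2 = n by ring] at h
      linarith [hx1.1, hx2.2]
  · -- part 2
    rintro ⟨x, hx1, hx2⟩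
    simp only [Imi, Set.mem_Icc] at hx1
    simp only [Ipl, Set.mem_Icc] at hx2
    have h5 : d (n - 2) ≤ c n := by
      have h := hsep' (n - 2)
      rwa [show n - 2 + 2 = n by ring] at h
    have := hx1.1
    have := hx2.2
    linarith
end
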